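/- Let A be a nonnegative d×2 real matrix of rank 2 with columns a, b. Then there exists a nonnegative basis {a', b'} of the column span of A such that every column of A lies in the nonnegative span of a' and b', obtained as follows: a'' = a − t b for the maximal t ≥ 0 keeping a'' nonnegative, then b'' = b − s a'' for the maximal s ≥ 0 keeping b'' nonnegative; each of a'', b'' has a zero entry in a position where the other is nonzero. -/
import Mathlib


open Finset

/-- reduction of a nonnegative basis of a rank-2 nonnegative
d×2 matrix to a nonnegative basis {a'', b''} in which each vector has a zero
entry where the other is nonzero, every column lies in the nonnegative span,
and the span is unchanged. -/
theorem stmt_18 {d : ℕ} (a b : Fin d → ℝ)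
    (ha : ∀ i, 0 ≤ a i) (hb : ∀ i, 0 ≤ b i)
    (hind : LinearIndependent ℝ ![a, b]) :
    ∃ t s : ℝ, 0 ≤ t ∧ 0 ≤ s ∧
      (∀ i, 0 ≤ a i - t * b i) ∧
      (∀ t', 0 ≤ t' → (∀ i, 0 ≤ a i - t' * b i) → t' ≤ t) ∧
      (∀ i, 0 ≤ b i - s * (a i - t * b i)) ∧
      (∀ s', 0 ≤ s' → (∀ i, 0 ≤ b i - s' * (a i - t * b i)) → s' ≤ s) ∧
      (∃ i, a i - t * b i = 0 ∧ 0 < b i - s * (a i - t * b i)) ∧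
      (∃ i, b i - s * (a i - t * b i) = 0 ∧ 0 < a i - t * b i) ∧
      Submodule.span ℝ {fun i => a i - t * b i,
          fun i => b i - s * (a i - t * b i)} =
        Submodule.span ℝ {a, b} ∧
      (∃ α β : ℝ, 0 ≤ α ∧ 0 ≤ β ∧
        a = fun i => α * (a i - t * b i) + β * (b i - s * (a i - t * b i))) ∧
      (∃ α β : ℝ, 0 ≤ α ∧ 0 ≤ β ∧
        b = fun i => α * (a i - t * b i) + β * (b i - s * (a i - t * b i))) := by
  have h2 := linearIndependent_fin2.mp hind
  have hbne : b ≠ 0 := by simpa using h2.1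
  have hnot : ∀ c : ℝ, c • b ≠ a := by simpa using h2.2
  -- set of indices where b is positive
  have hSb : (Finset.univ.filter fun i => 0 < b i).Nonempty := by
    obtain ⟨i, hi⟩ := Function.ne_iff.mp hbne
    exact ⟨i, by simp [lt_of_le_of_ne (hb i) (Ne.symm hi)]⟩
  set Sb := Finset.univ.filter fun i => 0 < b i with hSbdef
  have hmemSb : ∀ i ∈ Sb, 0 < b i := by intro i hi; simpa [hSbdef] using hi
  set t := Sb.inf' hSb (fun i => a i / b i) with htdef
  have ht0 : 0 ≤ t := by
    apply Finset.le_inf'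
    intro i hi
    exact div_nonneg (ha i) (hmemSb i hi).le
  have hta : ∀ i, 0 ≤ a i - t * b i := by
    intro i
    rcases eq_or_lt_of_le (hb i) with h | h
    · simp [← h, ha i]
    · have := Finset.inf'_le (fun i => a i / b i) (by rw [hSbdef]; exact Finset.mem_filter.mpr ⟨Finset.mem_univ i, h⟩ : i ∈ Sb)
      have : t * b i ≤ a i := by
        rw [← le_div_iff₀ h]; exact this
      linarith
  obtain ⟨i0, hi0, hti0⟩ := Finset.exists_mem_eq_inf' hSb (fun i => a i / b i)
  have hbi0 : 0 < b i0 := hmemSb i0 hi0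
  have htmax : ∀ t', 0 ≤ t' → (∀ i, 0 ≤ a i - t' * b i) → t' ≤ t := by
    intro t' _ h
    have := h i0
    rw [htdef.trans hti0, le_div_iff₀ hbi0]
    linarith
  have hai0 : a i0 - t * b i0 = 0 := by
    rw [htdef.trans hti0, div_mul_cancel₀ _ hbi0.ne']; ring
  -- a'' nonzero
  have ha''ne : ∃ i, 0 < a i - t * b i := by
    by_contra hco
    push_neg at hco
    have : ∀ i, a i - t * b i = 0 := fun i => le_antisymm (hco i) (hta i)
    refine hnot t ?_
    funext i
    have h3 := this i
    simp only [Pi.smul_apply, smul_eq_mul]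
    linarith
  have hSa : (Finset.univ.filter fun i => 0 < a i - t * b i).Nonempty := by
    obtain ⟨i, hi⟩ := ha''ne
    exact ⟨i, Finset.mem_filter.mpr ⟨Finset.mem_univ i, hi⟩⟩
  set Sa := Finset.univ.filter fun i => 0 < a i - t * b i with hSadef
  have hmemSa : ∀ i ∈ Sa, 0 < a i - t * b i := by intro i hi; simpa [hSadef] using hi
  set s := Sa.inf' hSa (fun i => b i / (a i - t * b i)) with hsdef
  have hs0 : 0 ≤ s := by
    apply Finset.le_inf'
    intro i hi
    exact div_nonneg (hb i) (hmemSa i hi).le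
  have hsb : ∀ i, 0 ≤ b i - s * (a i - t * b i) := by
    intro i
    rcases eq_or_lt_of_le (hta i) with h | h
    · simp [← h, hb i]
    · have := Finset.inf'_le (fun i => b i / (a i - t * b i)) (by rw [hSadef]; exact Finset.mem_filter.mpr ⟨Finset.mem_univ i, h⟩ : i ∈ Sa)
      have : s * (a i - t * b i) ≤ b i := by
        rw [← le_div_iff₀ h]; exact this
      linarith
  obtain ⟨j0, hj0, hsj0⟩ := Finset.exists_mem_eq_inf' hSa (fun i => b i / (a i - t * b i))
  have haj0 : 0 < a j0 - t * b j0 := hmemSa j0 hj0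
  have hsmax : ∀ s', 0 ≤ s' → (∀ i, 0 ≤ b i - s' * (a i - t * b i)) → s' ≤ s := by
    intro s' _ h
    have := h j0
    rw [hsdef.trans hsj0, le_div_iff₀ haj0]
    linarith
  have hbj0 : b j0 - s * (a j0 - t * b j0) = 0 := by
    rw [hsdef.trans hsj0, div_mul_cancel₀ _ haj0.ne']; ring
  refine ⟨t, s, ht0, hs0, hta, htmax, hsb, hsmax,
    ⟨i0, hai0, by rw [hai0]; simpa using hbi0⟩,
    ⟨j0, hbj0, haj0⟩, ?_, ⟨1 + t * s, t, by positivity, ht0, ?_⟩,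
    ⟨s, 1, hs0, zero_le_one, ?_⟩⟩
  · set A'' : Fin d → ℝ := fun i => a i - t * b i with hA
    set B'' : Fin d → ℝ := fun i => b i - s * (a i - t * b i) with hB
    have haeq : a = (1 + t * s) • A'' + t • B'' := by
      funext i; simp only [hA, hB, Pi.add_apply, Pi.smul_apply, smul_eq_mul]; ring
    have hbeq : b = s • A'' + B'' := by
      funext i; simp only [hA, hB, Pi.add_apply, Pi.smul_apply, smul_eq_mul]; ring
    have hAeq : A'' = a - t • b := by
      funext i; simp only [hA, Pi.sub_apply, Pi.smul_apply, smul_eq_mul]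
    have hBeq : B'' = (-s) • a + (1 + s * t) • b := by
      funext i; simp only [hB, Pi.add_apply, Pi.smul_apply, smul_eq_mul]; ring
    apply le_antisymm
    · rw [Submodule.span_le]
      rintro x (rfl | rfl)
      · rw [hAeq]
        exact sub_mem (Submodule.subset_span (Set.mem_insert _ _))
          (Submodule.smul_mem _ _ (Submodule.subset_span (Set.mem_insert_of_mem _ rfl)))
      · rw [hBeq]
        exact add_mem (Submodule.smul_mem _ _ (Submodule.subset_span (Set.mem_insert _ _)))
          (Submodule.smul_mem _ _ (Submodule.subset_span (Set.mem_insert_of_mem _ rfl)))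
    · rw [Submodule.span_le]
      rintro x (rfl | rfl)
      · rw [haeq]
        exact add_mem (Submodule.smul_mem _ _ (Submodule.subset_span (Set.mem_insert _ _)))
          (Submodule.smul_mem _ _ (Submodule.subset_span (Set.mem_insert_of_mem _ rfl)))
      · rw [hbeq]
        exact add_mem (Submodule.smul_mem _ _ (Submodule.subset_span (Set.mem_insert _ _)))
          (Submodule.subset_span (Set.mem_insert_of_mem _ rfl))
  · funext i; ring
  · funext i; ring
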